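/- Let H(y) := −y·log y − (1−y)·log(1−y) be the binary entropy function (natural logarithm). For every x ∈ (0, log 2] and every y ∈ (0, 1/2] with H(y) = x, it holds that x / (2·log(6/x)) ≤ y ≤ x / log(1/x). -/

import Mathlib

set_option maxHeartbeats 1000000


/-- The binary entropy function (natural logarithm). -/
noncomputable def binEnt (y : ℝ) : ℝ := -y * Real.log y - (1 - y) * Real.log (1 - y)

/-- For every `x ∈ (0, log 2]` and `y ∈ (0, 1/2]` with `H(y) = x`:
`x / (2 log (6/x)) ≤ y ≤ x / log (1/x)`. -/
theorem stmt_11 (x y : ℝ) (hx : x ∈ Set.Ioc (0 : ℝ) (Real.log 2))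
    (hy : y ∈ Set.Ioc (0 : ℝ) (1/2)) (hxy : binEnt y = x) :
    x / (2 * Real.log (6 / x)) ≤ y ∧ y ≤ x / Real.log (1 / x) := by
  obtain ⟨hx0, hxle⟩ := hx
  obtain ⟨hy0, hy2⟩ := hy
  have h1y : (0:ℝ) < 1 - y := by linarith
  have hlog2 : (0.6931471803 : ℝ) < Real.log 2 := Real.log_two_gt_d9
  have hlog2' : Real.log 2 < 0.6931471808 := Real.log_two_lt_d9
  set t : ℝ := -Real.log y with htdef
  have hty : Real.exp t = 1 / y := by
    rw [htdef, Real.exp_neg, Real.exp_log hy0, one_div]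
  have hly : Real.log (1/y) = t := by
    rw [Real.log_div one_ne_zero (ne_of_gt hy0), Real.log_one, zero_sub, htdef]
  have ht2 : Real.log 2 ≤ t := by
    rw [← hly]
    apply Real.log_le_log (by norm_num)
    rw [le_div_iff₀ hy0]; linarith
  have ht0 : 0 < t := by linarith
  have hA : Real.log (1 - y) ≤ -y := by
    have := Real.log_le_sub_one_of_pos h1y; linarith
  have hB : -(1 - y) * Real.log (1 - y) ≤ y := by
    have h := Real.log_le_sub_one_of_pos (show (0:ℝ) < (1-y)⁻¹ from inv_pos.mpr h1y)
    rw [Real.log_inv] at h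
    have h2 : (1 - y) * ((1-y)⁻¹ - 1) = y := by field_simp; ring
    nlinarith [h, h1y]
  have hC : 0 ≤ -(1 - y) * Real.log (1 - y) := by
    have : Real.log (1 - y) ≤ 0 := Real.log_nonpos (by linarith) (by linarith)
    nlinarith
  have hxlow : y * t ≤ x := by
    rw [← hxy]; unfold binEnt; rw [htdef] at *; nlinarith [hC]
  have hxup : x ≤ y * (1 + t) := by
    rw [← hxy]; unfold binEnt; rw [htdef] at *; nlinarith [hB]
  have hyx : y ≤ x := by
    have hx2 : y * t + y * (1 - y) ≤ x := by
      rw [← hxy]; unfold binEnt; rw [htdef] at *; nlinarith [hA, h1y]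
    nlinarith [ht2, hlog2]
  constructor
  · -- lower bound
    have hexp : t/2 + 1 ≤ Real.exp (t/2) := Real.add_one_le_exp (t/2)
    have hsq : Real.exp (t/2) * Real.exp (t/2) = Real.exp t := by
      rw [← Real.exp_add]; ring_nf
    have hkey : (1 + t)^2 ≤ 4 * Real.exp t := by
      nlinarith [hexp, hsq, Real.exp_pos (t/2), ht0]
    have hx2y : x^2 ≤ 4 * y := by
      have h1 : x^2 ≤ (y * (1+t))^2 := by nlinarith
      have h3 : y^2 * (1+t)^2 ≤ y^2 * (4 * Real.exp t) :=
        mul_le_mul_of_nonneg_left hkey (sq_nonneg y)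
      have h4 : y^2 * (4 * Real.exp t) = 4 * y := by
        rw [hty]; field_simp
      calc x^2 ≤ (y*(1+t))^2 := h1
      _ = y^2 * (1+t)^2 := by ring
      _ ≤ y^2 * (4 * Real.exp t) := h3
      _ = 4 * y := h4
    have he9 : Real.exp 1 ≤ 9 := by
      have := Real.exp_one_lt_d9; linarith
    have hlogle : 1 + t ≤ 2 * Real.log (6 / x) := by
      have hdiv : Real.exp 1 / y ≤ 36 / x^2 := by
        rw [div_le_div_iff₀ hy0 (by positivity)]
        nlinarith [Real.exp_pos 1, sq_nonneg x]
      have hl := Real.log_le_log (by positivity) hdiv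
      rw [Real.log_div (Real.exp_ne_zero 1) (ne_of_gt hy0), Real.log_exp] at hl
      have h36 : Real.log (36 / x^2) = 2 * Real.log (6/x) := by
        rw [show (36:ℝ)/x^2 = (6/x)^2 by ring, Real.log_pow]
        push_cast; ring
      rw [h36] at hl
      have : Real.log y = -t := by rw [htdef]; ring
      linarith [hl, this.symm ▸ hl]
    have hlogpos : 0 < Real.log (6 / x) := by linarith
    rw [div_le_iff₀ (by positivity)]
    nlinarith [hxup, hy0]
  · -- upper bound
    have hlogpos : 0 < Real.log (1/x) := Real.log_pos (by rw [lt_div_iff₀ hx0]; linarith)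
    rw [le_div_iff₀ hlogpos]
    have hmono : Real.log (1/x) ≤ Real.log (1/y) := by
      apply Real.log_le_log (by positivity)
      gcongr
    rw [hly] at hmono
    nlinarith [hxlow, hy0]
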